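/- Let g : Y → ℝ be sublinear and continuous on a Banach space Y with ∂g(0) weak*-compact, let A : Z → Y be a continuous linear map, y₀ ∈ Y, and ε > 0. Then inf_{h ∈ Z} [ g(y₀ + Ah) + ε‖h‖ ] = sup { ⟨y*, y₀⟩ : y* ∈ ∂g(0), ‖A* y*‖ ≤ ε }, where A* is the adjoint of A. -/

import Mathlib

open Pointwise


/-- Minimax identity (16): the infimum of `g (y₀ + A h) + ε ‖h‖` over `h`
equals the supremum of `⟨y*, y₀⟩` over the subgradients `y* ∈ ∂g(0)` whose
adjoint image `A* y*` has norm at most `ε`. -/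
theorem sublinear_minimax
    {Y Z : Type*} [NormedAddCommGroup Y] [NormedSpace ℝ Y] [CompleteSpace Y]
    [NormedAddCommGroup Z] [NormedSpace ℝ Z] [CompleteSpace Z]
    (g : Y → ℝ) (hgc : Continuous g)
    (hgh : ∀ c : ℝ, 0 ≤ c → ∀ y : Y, g (c • y) = c * g y)
    (hga : ∀ y z : Y, g (y + z) ≤ g y + g z)
    (A : Z →L[ℝ] Y) (y₀ : Y) (ε : ℝ) (hε : 0 < ε) :
    sInf {r : ℝ | ∃ h : Z, r = g (y₀ + A h) + ε * ‖h‖} =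
      sSup {r : ℝ | ∃ ys : Y →L[ℝ] ℝ, (∀ y : Y, ys y ≤ g y) ∧
        ‖ys.comp A‖ ≤ ε ∧ r = ys y₀} := by
  classical
  set S : Y → Set ℝ := fun y => {r : ℝ | ∃ h : Z, r = g (y + A h) + ε * ‖h‖} with hS
  set T : Set ℝ := {r : ℝ | ∃ ys : Y →L[ℝ] ℝ, (∀ y : Y, ys y ≤ g y) ∧
        ‖ys.comp A‖ ≤ ε ∧ r = ys y₀} with hT
  have hg0 : g 0 = 0 := by simpa using hgh 0 le_rfl 0
  -- a linear bound for g
  obtain ⟨C, hC0, hgC⟩ : ∃ C : ℝ, 0 < C ∧ ∀ v : Y, g v ≤ C * ‖v‖ := by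
    have h1 : ∀ᶠ v in nhds (0 : Y), g v < 1 := by
      have := hgc.continuousAt (x := (0 : Y))
      have := this (Iio_mem_nhds (by simp [hg0] : g (0:Y) < 1))
      exact this
    rcases Metric.eventually_nhds_iff_ball.1 h1 with ⟨δ, hδ, hball⟩
    refine ⟨2 / δ, by positivity, fun v => ?_⟩
    rcases eq_or_ne v 0 with rfl | hv
    · simp [hg0]
    · have hnv : 0 < ‖v‖ := norm_pos_iff.2 hv
      set w : Y := (δ / (2 * ‖v‖)) • v with hw
      have hwn : ‖w‖ = δ / 2 := by
        rw [hw, norm_smul, Real.norm_eq_abs, abs_of_pos (by positivity)]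
        field_simp
      have hgw : g w < 1 := by
        apply hball
        simp [dist_eq_norm, hwn]
        linarith
      have hvw : v = (2 * ‖v‖ / δ) • w := by
        rw [hw, smul_smul]
        rw [show 2 * ‖v‖ / δ * (δ / (2 * ‖v‖)) = 1 by field_simp, one_smul]
      have hkey : g v = (2 * ‖v‖ / δ) * g w := by
        have := hgh (2 * ‖v‖ / δ) (by positivity) w
        rw [← hvw] at this
        exact this
      calc g v = (2 * ‖v‖ / δ) * g w := hkey
        _ ≤ (2 * ‖v‖ / δ) * 1 := by
            apply mul_le_mul_of_nonneg_left hgw.le (by positivity)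
        _ = 2 / δ * ‖v‖ := by ring
  have hSne : ∀ y : Y, (S y).Nonempty := fun y => ⟨g (y + A 0) + ε * ‖(0:Z)‖, 0, rfl⟩
  -- weak duality: every element of T is a lower bound for S y₀
  have weak : ∀ r ∈ T, ∀ s ∈ S y₀, r ≤ s := by
    rintro r ⟨ys, hysg, hysA, rfl⟩ s ⟨h, rfl⟩
    have h1 : ys (y₀ + A h) ≤ g (y₀ + A h) := hysg _
    have h2 : ys (A (-h)) ≤ ε * ‖h‖ := by
      have := (ys.comp A).le_opNorm (-h)
      have habs : ys (A (-h)) ≤ ‖ys.comp A‖ * ‖-h‖ :=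
        le_trans (le_abs_self _) (by simpa [Real.norm_eq_abs] using this)
      calc ys (A (-h)) ≤ ‖ys.comp A‖ * ‖-h‖ := habs
        _ ≤ ε * ‖h‖ := by
            rw [norm_neg]
            exact mul_le_mul_of_nonneg_right hysA (norm_nonneg _)
    have : ys y₀ = ys (y₀ + A h) + ys (A (-h)) := by
      rw [← map_add]
      congr 1
      simp
    linarith
  by_cases hB : BddBelow (S y₀)
  · -- main case
    set p : Y → ℝ := fun y => sInf (S y) with hp
    have hlbS : ∀ s ∈ S y₀, p y₀ ≤ s := fun s hs => csInf_le hB hs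
    have hBdd : ∀ y : Y, BddBelow (S y) := by
      intro y
      refine ⟨p y₀ - g (y₀ - y), ?_⟩
      rintro s ⟨h, rfl⟩
      have key : g (y₀ + A h) ≤ g (y + A h) + g (y₀ - y) := by
        have := hga (y + A h) (y₀ - y)
        have he : (y + A h) + (y₀ - y) = y₀ + A h := by abel
        rwa [he] at this
      have h2 : p y₀ ≤ g (y₀ + A h) + ε * ‖h‖ := hlbS _ ⟨h, rfl⟩
      show p y₀ - g (y₀ - y) ≤ g (y + A h) + ε * ‖h‖
      linarith
    have hpg : ∀ y : Y, p y ≤ g y := by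
      intro y
      have : g (y + A 0) + ε * ‖(0:Z)‖ = g y := by simp
      have := csInf_le (hBdd y) (⟨0, rfl⟩ : g (y + A 0) + ε * ‖(0:Z)‖ ∈ S y)
      simpa [show g (y + A 0) + ε * ‖(0:Z)‖ = g y by simp] using this
    have hpA : ∀ h : Z, p (A h) ≤ ε * ‖h‖ := by
      intro h
      have hmem : g (A h + A (-h)) + ε * ‖-h‖ ∈ S (A h) := ⟨-h, rfl⟩
      have := csInf_le (hBdd (A h)) hmem
      simpa [hg0, show A h + A (-h) = 0 by simp] using this
    have hp_hom : ∀ c : ℝ, 0 < c → ∀ y : Y, p (c • y) = c * p y := by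
      intro c hc y
      have hset : S (c • y) = c • (S y) := by
        ext r
        constructor
        · rintro ⟨h, rfl⟩
          refine ⟨g (y + A (c⁻¹ • h)) + ε * ‖c⁻¹ • h‖, ⟨c⁻¹ • h, rfl⟩, ?_⟩
          have h1 : c • (y + A (c⁻¹ • h)) = c • y + A h := by
            rw [smul_add, map_smul, smul_smul, mul_inv_cancel₀ hc.ne', one_smul]
          have := hgh c hc.le (y + A (c⁻¹ • h))
          rw [h1] at this
          simp only [smul_eq_mul]
          rw [mul_add, ← this]
          congr 1
          rw [norm_smul, Real.norm_eq_abs, abs_of_pos (by positivity : (0:ℝ) < c⁻¹)]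
          field_simp
        · rintro ⟨s, ⟨h, rfl⟩, rfl⟩
          refine ⟨c • h, ?_⟩
          have h1 : c • (y + A h) = c • y + A (c • h) := by
            rw [smul_add, map_smul]
          have := hgh c hc.le (y + A h)
          rw [h1] at this
          simp only [smul_eq_mul]
          rw [this, norm_smul, Real.norm_eq_abs, abs_of_pos hc]
          ring
      rw [hp]
      simp only
      rw [hset, Real.sInf_smul_of_nonneg hc.le, smul_eq_mul]
    have hp_add : ∀ y z : Y, p (y + z) ≤ p y + p z := by
      intro y z
      have key : ∀ a ∈ S y, ∀ b ∈ S z, p (y + z) ≤ a + b := by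
        rintro a ⟨h1, rfl⟩ b ⟨h2, rfl⟩
        have hmem : g ((y + z) + A (h1 + h2)) + ε * ‖h1 + h2‖ ∈ S (y + z) := ⟨h1 + h2, rfl⟩
        have hle1 : p (y + z) ≤ g ((y + z) + A (h1 + h2)) + ε * ‖h1 + h2‖ :=
          csInf_le (hBdd _) hmem
        have hge : g ((y + z) + A (h1 + h2)) ≤ g (y + A h1) + g (z + A h2) := by
          have := hga (y + A h1) (z + A h2)
          have he : (y + A h1) + (z + A h2) = (y + z) + A (h1 + h2) := by
            rw [map_add]; abel
          rwa [he] at this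
        have hn : ‖h1 + h2‖ ≤ ‖h1‖ + ‖h2‖ := norm_add_le _ _
        nlinarith [hε.le]
      have step1 : ∀ b ∈ S z, p (y + z) - b ≤ p y := by
        intro b hb
        exact le_csInf (hSne y) fun a ha => by linarith [key a ha b hb]
      have step2 : p (y + z) - p y ≤ p z :=
        le_csInf (hSne z) fun b hb => by linarith [step1 b hb]
      linarith
    have hp0 : p 0 = 0 := by
      have h1 : p 0 ≤ 0 := by simpa [hg0] using hpg 0
      have h2 : (0:ℝ) ≤ p 0 := by
        have := hp_add 0 0
        simp at this
        linarith
      linarith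
    -- construct the linear functional
    obtain ⟨ys, hysp, hys0⟩ : ∃ ys : Y →ₗ[ℝ] ℝ, (∀ x : Y, ys x ≤ p x) ∧ ys y₀ = p y₀ := by
      by_cases hy₀ : y₀ = 0
      · obtain ⟨ys, _, hle⟩ := exists_extension_of_le_sublinear
          ⟨⊥, 0⟩ p hp_hom hp_add (fun x => by
            rcases x with ⟨x, hx⟩
            have : x = 0 := by simpa using hx
            simp [this, hp0])
        refine ⟨ys, hle, ?_⟩
        rw [hy₀, map_zero, hp0]
      · have Hc : ∀ c : ℝ, c • y₀ = 0 → c • (p y₀) = 0 := fun c hc =>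
          (smul_eq_zero.1 hc).elim (fun hc => by rw [hc, zero_smul])
            fun hx' => absurd hx' hy₀
        set f : Y →ₗ.[ℝ] ℝ := LinearPMap.mkSpanSingleton' y₀ (p y₀) Hc with hf
        have hfle : ∀ x : f.domain, f x ≤ p x := by
          rintro ⟨x, hx⟩
          rcases Submodule.mem_span_singleton.1 hx with ⟨t, rfl⟩
          have hval : f ⟨t • y₀, hx⟩ = t * p y₀ := by
            have h := LinearPMap.mkSpanSingleton'_apply y₀ (p y₀) Hc t hx
            rw [smul_eq_mul] at h
            exact h
          rw [hval]
          rcases lt_trichotomy t 0 with htn | rfl | htp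
          · have h1 : p (t • y₀) = (-t) * p (-y₀) := by
              have : t • y₀ = (-t) • (-y₀) := by simp
              rw [this, hp_hom (-t) (by linarith) (-y₀)]
            have h2 : 0 ≤ p y₀ + p (-y₀) := by
              have := hp_add y₀ (-y₀)
              simp [hp0] at this
              linarith
            rw [h1]
            nlinarith
          · simp [hp0]
          · rw [hp_hom t htp]
        obtain ⟨ys, heq, hle⟩ := exists_extension_of_le_sublinear f p hp_hom hp_add hfle
        refine ⟨ys, hle, ?_⟩
        have hmem : y₀ ∈ f.domain := Submodule.mem_span_singleton_self y₀
        have h2 : f ⟨y₀, hmem⟩ = p y₀ :=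
          LinearPMap.mkSpanSingleton'_apply_self y₀ (p y₀) Hc hmem
        rw [heq ⟨y₀, hmem⟩, h2]
    -- continuity
    have hbound : ∀ x : Y, ‖ys x‖ ≤ C * ‖x‖ := by
      intro x
      rw [Real.norm_eq_abs, abs_le]
      constructor
      · have h1 : ys (-x) ≤ g (-x) := le_trans (hysp (-x)) (hpg (-x))
        have h2 : g (-x) ≤ C * ‖-x‖ := hgC (-x)
        rw [norm_neg] at h2
        rw [map_neg] at h1
        linarith
      · exact le_trans (le_trans (hysp x) (hpg x)) (le_trans (hgC x) le_rfl)
    set Ys : Y →L[ℝ] ℝ := LinearMap.mkContinuous ys C hbound with hYs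
    have hYsapp : ∀ x : Y, Ys x = ys x := fun x => rfl
    have hYsT : Ys y₀ ∈ T := by
      refine ⟨Ys, fun y => le_trans (hysp y) (hpg y), ?_, rfl⟩
      apply ContinuousLinearMap.opNorm_le_bound _ hε.le
      intro h
      rw [ContinuousLinearMap.comp_apply, Real.norm_eq_abs, abs_le]
      constructor
      · have h1 : ys (A (-h)) ≤ ε * ‖h‖ := by
          have := le_trans (hysp (A (-h))) (hpA (-h))
          simpa [norm_neg] using this
        rw [map_neg, map_neg] at h1
        have : Ys (A h) = ys (A h) := rfl
        rw [this]
        linarith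
      · exact le_trans (hysp (A h)) (hpA h)
    -- conclude
    have hval : Ys y₀ = p y₀ := by rw [hYsapp, hys0]
    have hTbdd : BddAbove T := ⟨p y₀, fun r hr => by
      exact le_csInf (hSne y₀) (weak r hr)⟩
    refine le_antisymm ?_ ?_
    · calc sInf (S y₀) = Ys y₀ := hval.symm
        _ ≤ sSup T := le_csSup hTbdd hYsT
    · exact csSup_le ⟨Ys y₀, hYsT⟩ fun r hr => le_csInf (hSne y₀) (weak r hr)
  · -- degenerate case: both sides are the junk value 0
    have hTempty : T = ∅ := by
      by_contra hne
      rcases Set.nonempty_iff_ne_empty.2 hne with ⟨r, hr⟩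
      exact hB ⟨r, fun s hs => weak r hr s hs⟩
    rw [Real.sInf_of_not_bddBelow hB, hTempty, Real.sSup_empty]
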